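/- arXiv:2509.03714 — 2 statements merged into one kernel-verified Lean document; each statement's English description precedes it below -/
import Mathlib

section
/- Let C : Fin d → Fin d → Fin d → ℝ be antisymmetric in its two upper indices and satisfy the Jacobi identity, and let t^σ := Σ_ν C^{νσ}_ν. Let A : (Fin d → ℝ) → (Fin d → ℝ) and f : (Fin d → ℝ) → ℝ be differentiable, and fix x ∈ (Fin d → ℝ) with ‖Â(x)‖ < 2π, where Â(x)^μ_ν := Σ_σ C^{σμ}_ν·A_σ(x). Define M(y) := exp(Σ_σ t^σ·A_σ(y)), δA_μ(x) := Σ_ξ (γ_u(Â(x)))^ξ_μ·∂_ξ f(x) + {A_μ, f}(x), and δM(x) := M(x)·Σ_ξ t^ξ·δA_ξ(x). Then δM(x) = M(x)·Σ_σ t^σ·∂_σ f(x) + {M, f}(x). -/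
open scoped Matrix

attribute [local instance] Matrix.linftyOpNormedRing Matrix.linftyOpNormedAlgebra

/-- The universal matrix `γ_u(X) := ∑_{k=0}^∞ (B'_k/k!)·X^k`, with `B'_k` the Bernoulli
numbers with convention `B'_1 = +1/2`. -/
noncomputable def gammaU {d : ℕ} (X : Matrix (Fin d) (Fin d) ℝ) : Matrix (Fin d) (Fin d) ℝ :=
  ∑' k : ℕ, ((bernoulli' k : ℝ) / (Nat.factorial k : ℝ)) • X ^ k

/-- Partial derivative in the `μ`-th coordinate direction. -/
noncomputable def pd {d : ℕ} (μ : Fin d) (g : (Fin d → ℝ) → ℝ) (x : Fin d → ℝ) : ℝ :=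
  fderiv ℝ g x (Pi.single μ 1)

/-- The Lie-algebra-type Poisson bracket `{g,h}(x) = Σ x_λ C^{μν}_λ ∂_μ g ∂_ν h`. -/
noncomputable def pb {d : ℕ} (C : Fin d → Fin d → Fin d → ℝ) (g h : (Fin d → ℝ) → ℝ)
    (x : Fin d → ℝ) : ℝ :=
  ∑ lam, ∑ μ, ∑ ν, x lam * C μ ν lam * pd μ g x * pd ν h x

set_option maxHeartbeats 800000 in
lemma bern_abs_div_fact_le (k : ℕ) :
    |(bernoulli' k : ℝ)| / (Nat.factorial k : ℝ) ≤ 4 / (2 * Real.pi) ^ k := by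
  have hpi : (0:ℝ) < Real.pi := Real.pi_pos
  rcases Nat.even_or_odd k with hev | hodd
  · obtain ⟨m, hm⟩ := hev
    have hm' : k = 2 * m := by omega
    subst hm'
    rcases Nat.eq_zero_or_pos m with rfl | hm1
    · norm_num
    · have hmne : m ≠ 0 := hm1.ne'
      have hZ := hasSum_zeta_nat (k := m) hmne
      set B : ℝ := (bernoulli (2 * m) : ℝ) with hB
      set Z : ℝ := (-1 : ℝ) ^ (m + 1) * (2:ℝ) ^ (2 * m - 1) * Real.pi ^ (2 * m) * B /
        (Nat.factorial (2 * m) : ℝ) with hZdef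
      have hZ0 : 0 ≤ Z := hZ.nonneg (fun n => by positivity)
      have hZ2 : Z ≤ 2 := by
        have hle : Z ≤ Real.pi ^ 2 / 6 := by
          refine hasSum_le (fun n => ?_) hZ hasSum_zeta_two
          rcases Nat.eq_zero_or_pos n with rfl | hn
          · norm_num [zero_pow (by omega : 2 * m ≠ 0)]
          · have h1 : (1:ℝ) ≤ (n:ℝ) := by exact_mod_cast hn
            have : (n:ℝ) ^ 2 ≤ (n:ℝ) ^ (2 * m) :=
              pow_le_pow_right₀ h1 (by omega)
            exact one_div_le_one_div_of_le (by positivity) this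
        have : Real.pi < 3.15 := Real.pi_lt_d2
        nlinarith
      have habs : |Z| = (2:ℝ) ^ (2 * m - 1) * Real.pi ^ (2 * m) *
          (|B| / (Nat.factorial (2 * m) : ℝ)) := by
        rw [hZdef]
        simp only [abs_div, abs_mul, abs_pow, abs_neg, abs_one, one_pow, abs_two,
          abs_of_nonneg hpi.le, Nat.abs_cast]
        ring
      have hZabs : |Z| = Z := abs_of_nonneg hZ0
      have hbb : |(bernoulli' (2 * m) : ℝ)| = |B| := by
        rw [hB, bernoulli_eq_bernoulli'_of_ne_one (by omega)]
      rw [hbb]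
      have key : (2:ℝ) ^ (2 * m - 1) * Real.pi ^ (2 * m) *
          (|B| / (Nat.factorial (2 * m) : ℝ)) ≤ 2 := by
        rw [← habs, hZabs]; exact hZ2
      have hpow : (2 * Real.pi) ^ (2 * m) = 2 * ((2:ℝ) ^ (2 * m - 1) * Real.pi ^ (2 * m)) := by
        rw [mul_pow]
        have h2 : (2:ℝ) ^ (2 * m) = 2 * (2:ℝ) ^ (2 * m - 1) := by
          rw [← pow_succ']
          congr 1
          omega
        rw [h2]; ring
      have hpos : (0:ℝ) < (2:ℝ) ^ (2 * m - 1) * Real.pi ^ (2 * m) := by positivity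
      have hfpos : (0:ℝ) < (Nat.factorial (2 * m) : ℝ) := by
        exact_mod_cast Nat.factorial_pos (2 * m)
      have key' : (2:ℝ) ^ (2 * m - 1) * Real.pi ^ (2 * m) * |B| ≤
          2 * (Nat.factorial (2 * m) : ℝ) := by
        rw [← mul_div_assoc] at key
        rw [div_le_iff₀ hfpos] at key
        linarith
      rw [hpow, div_le_div_iff₀ hfpos (by positivity)]
      nlinarith [key', hpos, abs_nonneg B, hfpos]
  · rcases Nat.lt_or_ge 1 k with hk1 | hk1
    · rw [bernoulli'_eq_zero_of_odd hodd hk1]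
      simp only [Rat.cast_zero, abs_zero, zero_div]
      positivity
    · interval_cases k
      · exact absurd hodd (by decide)
      · have h4 : Real.pi ≤ 4 := Real.pi_le_four
        rw [bernoulli'_one]
        push_cast
        rw [div_le_div_iff₀ (by norm_num) (by positivity)]
        rw [abs_of_nonneg (by norm_num : (0:ℝ) ≤ 1/2)]
        norm_num [Nat.factorial]
        nlinarith

set_option maxHeartbeats 1000000 in
lemma gammaU_summable {d : ℕ} (X : Matrix (Fin d) (Fin d) ℝ) (h : ‖X‖ < 2 * Real.pi) :
    Summable (fun k : ℕ => ((bernoulli' k : ℝ) / (Nat.factorial k : ℝ)) • X ^ k) := by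
  have hpi : (0:ℝ) < 2 * Real.pi := by positivity
  set r : ℝ := ‖X‖ / (2 * Real.pi) with hr
  have hr0 : 0 ≤ r := by positivity
  have hr1 : r < 1 := (div_lt_one hpi).mpr h
  have hgeo : Summable (fun k : ℕ => 4 * r ^ k) :=
    (summable_geometric_of_lt_one hr0 hr1).mul_left 4
  rw [← summable_nat_add_iff 1]
  refine Summable.of_norm_bounded (g := fun k => 4 * r ^ (k + 1))
    ((summable_nat_add_iff 1).mpr hgeo) fun k => ?_
  have h1 : ‖((bernoulli' (k+1) : ℝ) / (Nat.factorial (k+1) : ℝ)) • X ^ (k+1)‖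
      ≤ |(bernoulli' (k+1) : ℝ)| / (Nat.factorial (k+1) : ℝ) * ‖X‖ ^ (k + 1) := by
    rw [norm_smul]
    have := norm_pow_le' X (Nat.succ_pos k)
    have hc : ‖(bernoulli' (k+1) : ℝ) / (Nat.factorial (k+1) : ℝ)‖
        = |(bernoulli' (k+1) : ℝ)| / (Nat.factorial (k+1) : ℝ) := by
      rw [Real.norm_eq_abs, abs_div, Nat.abs_cast]
    rw [hc]
    exact mul_le_mul_of_nonneg_left this (by positivity)
  refine h1.trans ?_
  have h2 := bern_abs_div_fact_le (k + 1)
  have h3 : |(bernoulli' (k+1) : ℝ)| / (Nat.factorial (k+1) : ℝ) * ‖X‖ ^ (k + 1)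
      ≤ 4 / (2 * Real.pi) ^ (k+1) * ‖X‖ ^ (k + 1) :=
    mul_le_mul_of_nonneg_right h2 (by positivity)
  refine h3.trans_eq ?_
  show _ = 4 * (‖X‖ / (2 * Real.pi)) ^ (k + 1)
  rw [div_pow]
  field_simp

lemma gammaU_mulVec_eq {d : ℕ} (X : Matrix (Fin d) (Fin d) ℝ) (h : ‖X‖ < 2 * Real.pi)
    (t : Fin d → ℝ) (ht : X *ᵥ t = 0) : gammaU X *ᵥ t = t := by
  classical
  let φ₀ : Matrix (Fin d) (Fin d) ℝ →ₗ[ℝ] (Fin d → ℝ) :=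
    { toFun := fun N => N *ᵥ t
      map_add' := fun N₁ N₂ => Matrix.add_mulVec N₁ N₂ t
      map_smul' := fun c N => Matrix.smul_mulVec c N t }
  let φ : Matrix (Fin d) (Fin d) ℝ →L[ℝ] (Fin d → ℝ) := LinearMap.toContinuousLinearMap φ₀
  have hφ : ∀ N, φ N = N *ᵥ t := fun N => rfl
  have hsum := gammaU_summable X h
  have h1 : gammaU X *ᵥ t = ∑' k : ℕ, ((bernoulli' k : ℝ) / (Nat.factorial k : ℝ)) • (X ^ k *ᵥ t) := by
    rw [show gammaU X *ᵥ t = φ (gammaU X) from rfl, gammaU, φ.map_tsum hsum]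
    congr 1
    funext k
    rw [map_smul, hφ]
  rw [h1]
  have h2 : ∀ k : ℕ, k ≠ 0 →
      ((bernoulli' k : ℝ) / (Nat.factorial k : ℝ)) • (X ^ k *ᵥ t) = 0 := by
    intro k hk
    obtain ⟨j, rfl⟩ := Nat.exists_eq_succ_of_ne_zero hk
    rw [pow_succ, ← Matrix.mulVec_mulVec, ht, Matrix.mulVec_zero, smul_zero]
  rw [tsum_eq_single 0 h2]
  simp [Matrix.one_mulVec]

lemma sum_swap4 {d : ℕ} (g : Fin d → Fin d → Fin d → Fin d → ℝ) :
    ∑ a, ∑ b, ∑ c, ∑ e, g a b c e = ∑ b, ∑ c, ∑ e, ∑ a, g a b c e := by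
  rw [Finset.sum_comm]
  refine Finset.sum_congr rfl fun b _ => ?_
  rw [Finset.sum_comm]
  refine Finset.sum_congr rfl fun c _ => ?_
  rw [Finset.sum_comm]

lemma t_char {d : ℕ} (C : Fin d → Fin d → Fin d → ℝ)
    (hC : ∀ μ ν lam, C μ ν lam = - C ν μ lam)
    (hJac : ∀ α ν β ξ, ∑ σ, (C ν σ α * C β ξ σ + C β σ α * C ξ ν σ + C ξ σ α * C ν β σ) = 0)
    (a b : Fin d) : ∑ σ, C a b σ * (∑ ν, C ν σ ν) = 0 := by
  have H : ∑ α, ∑ σ, (C α σ α * C a b σ + C a σ α * C b α σ + C b σ α * C α a σ) = 0 :=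
    Finset.sum_eq_zero fun α _ => hJac α α a b
  simp only [Finset.sum_add_distrib] at H
  have H1 : ∑ α, ∑ σ, C α σ α * C a b σ = ∑ σ, C a b σ * (∑ ν, C ν σ ν) := by
    rw [Finset.sum_comm]
    refine Finset.sum_congr rfl fun σ _ => ?_
    rw [Finset.mul_sum]
    exact Finset.sum_congr rfl fun α _ => mul_comm _ _
  have H2 : ∑ α, ∑ σ, C b σ α * C α a σ = - ∑ α, ∑ σ, C a σ α * C b α σ := by
    rw [Finset.sum_comm, ← Finset.sum_neg_distrib]
    refine Finset.sum_congr rfl fun σ _ => ?_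
    rw [← Finset.sum_neg_distrib]
    refine Finset.sum_congr rfl fun α _ => ?_
    rw [hC α a σ]
    ring
  linarith [H, H1, H2]

/-- Proposition 2 (universal realization): the integrating factor `M = exp(t·A)`
transforms as `δM = M·t^σ ∂_σ f + {M,f}`. -/
theorem integrating_factor_variation_universal {d : ℕ} (C : Fin d → Fin d → Fin d → ℝ)
    (hC : ∀ μ ν lam, C μ ν lam = - C ν μ lam)
    (hJac : ∀ α ν β ξ, ∑ σ, (C ν σ α * C β ξ σ + C β σ α * C ξ ν σ + C ξ σ α * C ν β σ) = 0)
    (t : Fin d → ℝ) (ht : t = fun σ => ∑ ν, C ν σ ν)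
    (A : (Fin d → ℝ) → (Fin d → ℝ)) (f : (Fin d → ℝ) → ℝ)
    (hA : Differentiable ℝ A) (hf : Differentiable ℝ f)
    (x : Fin d → ℝ)
    (Ahat : (Fin d → ℝ) → Matrix (Fin d) (Fin d) ℝ)
    (hAhat : ∀ y, Ahat y = Matrix.of fun μ ν => ∑ σ, C σ μ ν * A y σ)
    (hnorm : ‖Ahat x‖ < 2 * Real.pi)
    (M : (Fin d → ℝ) → ℝ) (hM : ∀ y, M y = Real.exp (∑ σ, t σ * A y σ))
    (δA : Fin d → ℝ) (δM : ℝ)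
    (hδA : ∀ μ, δA μ = (∑ ξ, (gammaU (Ahat x)) ξ μ * pd ξ f x) + pb C (fun y => A y μ) f x)
    (hδM : δM = M x * ∑ ξ, t ξ * δA ξ) :
    δM = M x * (∑ σ, t σ * pd σ f x) + pb C M f x := by
  classical
  have hAσ : ∀ σ, Differentiable ℝ (fun y => A y σ) := fun σ =>
    (ContinuousLinearMap.proj σ : ((Fin d) → ℝ) →L[ℝ] ℝ).differentiable.comp hA
  -- the character property of t
  have hchar : ∀ a b : Fin d, ∑ σ, C a b σ * t σ = 0 := by
    intro a b
    rw [ht]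
    exact t_char C hC hJac a b
  -- Ahat x annihilates t
  have hAt : Ahat x *ᵥ t = 0 := by
    funext μ
    rw [hAhat]
    simp only [Matrix.mulVec, dotProduct, Matrix.of_apply, Pi.zero_apply]
    have hswap : ∑ ν, (∑ σ, C σ μ ν * A x σ) * t ν
        = ∑ σ, (∑ ν, C σ μ ν * t ν) * A x σ := by
      simp_rw [Finset.sum_mul]
      rw [Finset.sum_comm]
      exact Finset.sum_congr rfl fun σ _ => Finset.sum_congr rfl fun ν _ => by ring
    rw [hswap]
    refine Finset.sum_eq_zero fun σ _ => ?_
    rw [hchar σ μ, zero_mul]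
  have hkey : gammaU (Ahat x) *ᵥ t = t := gammaU_mulVec_eq _ hnorm t hAt
  have hkey' : ∀ η, ∑ ξ, gammaU (Ahat x) η ξ * t ξ = t η := by
    intro η
    have h := congrFun hkey η
    simpa [Matrix.mulVec, dotProduct] using h
  -- derivative of M
  have hgd : Differentiable ℝ (fun y => ∑ σ, t σ * A y σ) := by
    apply Differentiable.fun_sum
    exact fun i _ => (hAσ i).const_mul (t i)
  have hpdM : ∀ μ, pd μ M x = M x * ∑ σ, t σ * pd μ (fun y => A y σ) x := by
    intro μ
    have hMfun : M = fun y => Real.exp (∑ σ, t σ * A y σ) := funext hM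
    rw [hMfun]
    unfold pd
    rw [fderiv_exp (hgd x)]
    rw [ContinuousLinearMap.smul_apply]
    rw [fderiv_fun_sum (fun i _ => ((hAσ i).differentiableAt).const_mul (t i))]
    rw [ContinuousLinearMap.sum_apply]
    rw [smul_eq_mul]
    congr 1
    refine Finset.sum_congr rfl fun σ _ => ?_
    rw [fderiv_const_mul ((hAσ σ).differentiableAt) (t σ)]
    rw [ContinuousLinearMap.smul_apply, smul_eq_mul]
  -- assemble
  rw [hδM]
  have hsplit : ∑ ξ, t ξ * δA ξ
      = (∑ ξ, t ξ * ∑ η, gammaU (Ahat x) η ξ * pd η f x)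
        + ∑ ξ, t ξ * pb C (fun y => A y ξ) f x := by
    simp_rw [hδA, mul_add, Finset.sum_add_distrib]
  have hS1 : (∑ ξ, t ξ * ∑ η, gammaU (Ahat x) η ξ * pd η f x) = ∑ σ, t σ * pd σ f x := by
    simp_rw [Finset.mul_sum]
    rw [Finset.sum_comm]
    refine Finset.sum_congr rfl fun η _ => ?_
    have : ∑ ξ, t ξ * (gammaU (Ahat x) η ξ * pd η f x)
        = (∑ ξ, gammaU (Ahat x) η ξ * t ξ) * pd η f x := by
      rw [Finset.sum_mul]
      exact Finset.sum_congr rfl fun ξ _ => by ring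
    rw [this, hkey' η]
  have hS2 : M x * ∑ ξ, t ξ * pb C (fun y => A y ξ) f x = pb C M f x := by
    have hR : pb C M f x = ∑ lam, ∑ μ, ∑ ν, ∑ ξ, M x * t ξ *
        (x lam * C μ ν lam * pd μ (fun y => A y ξ) x * pd ν f x) := by
      simp only [pb]
      refine Finset.sum_congr rfl fun lam _ => Finset.sum_congr rfl fun μ _ =>
        Finset.sum_congr rfl fun ν _ => ?_
      rw [hpdM μ]
      simp only [Finset.mul_sum, Finset.sum_mul]
      exact Finset.sum_congr rfl fun ξ _ => by ring
    have hL : M x * ∑ ξ, t ξ * pb C (fun y => A y ξ) f x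
        = ∑ ξ, ∑ lam, ∑ μ, ∑ ν, M x * t ξ *
          (x lam * C μ ν lam * pd μ (fun y => A y ξ) x * pd ν f x) := by
      rw [Finset.mul_sum]
      refine Finset.sum_congr rfl fun ξ _ => ?_
      simp only [pb, Finset.mul_sum]
      refine Finset.sum_congr rfl fun lam _ => Finset.sum_congr rfl fun μ _ =>
        Finset.sum_congr rfl fun ν _ => by ring
    rw [hL, hR, sum_swap4]
  rw [hsplit, mul_add, hS1, hS2]
end

section
/- Let C : Fin d → Fin d → Fin d → ℝ be antisymmetric in its two upper indices, and t^σ := Σ_ν C^{νσ}_ν. Let M, Q : (Fin d → ℝ) → ℝ be continuously differentiable and f : (Fin d → ℝ) → ℝ be twice continuously differentiable, and suppose δM, δQ : (Fin d → ℝ) → ℝ satisfy, for all x: δM(x) = M(x)·Σ_σ t^σ·∂_σ f(x) + {M,f}(x) and δQ(x) = {Q,f}(x). Then for all x: Q(x)·δM(x) + M(x)·δQ(x) = Σ_ν ∂_ν( y ↦ Σ_{ξ,σ} y_ξ·C^{νσ}_ξ·M(y)·Q(y)·∂_σ f(y) )(x). -/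
section helpers
variable {d : ℕ}

lemma pd_mul (μ : Fin d) (a b : (Fin d → ℝ) → ℝ) (x : Fin d → ℝ)
    (ha : DifferentiableAt ℝ a x) (hb : DifferentiableAt ℝ b x) :
    pd μ (fun y => a y * b y) x = pd μ a x * b x + a x * pd μ b x := by
  simp only [pd, fderiv_fun_mul ha hb, ContinuousLinearMap.add_apply,
    ContinuousLinearMap.smul_apply, smul_eq_mul]
  ring

lemma pd_coord (ν ξ : Fin d) (x : Fin d → ℝ) :
    pd ν (fun y => y ξ) x = if ξ = ν then 1 else 0 := by
  have : (fun y : Fin d → ℝ => y ξ) = fun y => (ContinuousLinearMap.proj (R := ℝ) (φ := fun _ : Fin d => ℝ) ξ) y := rfl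
  rw [pd, this, ContinuousLinearMap.fderiv]
  simp [Pi.single_apply]

lemma pd_sum {ι : Type*} (s : Finset ι) (μ : Fin d) (F : ι → (Fin d → ℝ) → ℝ) (x : Fin d → ℝ)
    (hF : ∀ i ∈ s, DifferentiableAt ℝ (F i) x) :
    pd μ (fun y => ∑ i ∈ s, F i y) x = ∑ i ∈ s, pd μ (F i) x := by
  simp only [pd, fderiv_fun_sum hF]
  simp

lemma pd_swap (f : (Fin d → ℝ) → ℝ) (hf : ContDiff ℝ 2 f) (ν σ : Fin d) (x : Fin d → ℝ) :
    pd ν (pd σ f) x = pd σ (pd ν f) x := by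
  have hsym := (hf.contDiffAt (x := x)).isSymmSndFDerivAt (by norm_num)
  have hd : DifferentiableAt ℝ (fderiv ℝ f) x :=
    ((hf.fderiv_right (m := 1) le_rfl).differentiable one_ne_zero).differentiableAt
  have key : ∀ v : Fin d → ℝ, fderiv ℝ (fun y => fderiv ℝ f y v) x
      = (fderiv ℝ (fderiv ℝ f) x).flip v := by
    intro v
    rw [fderiv_clm_apply hd (differentiableAt_const v)]
    simp
  have e1 : pd ν (pd σ f) x = fderiv ℝ (fun y => fderiv ℝ f y (Pi.single σ 1)) x (Pi.single ν 1) := rfl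
  have e2 : pd σ (pd ν f) x = fderiv ℝ (fun y => fderiv ℝ f y (Pi.single ν 1)) x (Pi.single σ 1) := rfl
  rw [e1, e2, key, key]
  exact hsym _ _

end helpers

/-- Proposition 3: if `δM = M·t^σ ∂_σ f + {M,f}` and `δQ = {Q,f}`, then
`Q·δM + M·δQ` is a total divergence. -/
theorem gauge_variation_is_total_divergence {d : ℕ} (C : Fin d → Fin d → Fin d → ℝ)
    (hC : ∀ μ ν lam, C μ ν lam = - C ν μ lam)
    (t : Fin d → ℝ) (ht : t = fun σ => ∑ ν, C ν σ ν)
    (M Q f : (Fin d → ℝ) → ℝ)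
    (hM : ContDiff ℝ 1 M) (hQ : ContDiff ℝ 1 Q) (hf : ContDiff ℝ 2 f)
    (δM δQ : (Fin d → ℝ) → ℝ)
    (hδM : ∀ x, δM x = M x * (∑ σ, t σ * pd σ f x) + pb C M f x)
    (hδQ : ∀ x, δQ x = pb C Q f x) :
    ∀ x, Q x * δM x + M x * δQ x
      = ∑ ν, pd ν (fun y => ∑ ξ, ∑ σ, y ξ * C ν σ ξ * M y * Q y * pd σ f y) x := by
  intro x
  have dM : Differentiable ℝ M := hM.differentiable one_ne_zero
  have dQ : Differentiable ℝ Q := hQ.differentiable one_ne_zero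
  have dP : ∀ σ : Fin d, Differentiable ℝ (pd σ f) := by
    intro σ
    have h1 : ContDiff ℝ 1 (fderiv ℝ f) := hf.fderiv_right (m := 1) le_rfl
    exact (h1.clm_apply contDiff_const).differentiable one_ne_zero
  have dcoord : ∀ ξ : Fin d, Differentiable ℝ (fun y : Fin d → ℝ => y ξ) := by
    intro ξ
    exact (ContinuousLinearMap.proj (R := ℝ) (φ := fun _ : Fin d => ℝ) ξ).differentiable
  -- differentiability of the nested products
  have d2 : ∀ (ν σ ξ : Fin d), Differentiable ℝ (fun y : Fin d → ℝ => y ξ * C ν σ ξ) :=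
    fun ν σ ξ => (dcoord ξ).mul (differentiable_const _)
  have d3 : ∀ (ν σ ξ : Fin d), Differentiable ℝ (fun y : Fin d → ℝ => y ξ * C ν σ ξ * M y) :=
    fun ν σ ξ => (d2 ν σ ξ).mul dM
  have d4 : ∀ (ν σ ξ : Fin d), Differentiable ℝ (fun y : Fin d → ℝ => y ξ * C ν σ ξ * M y * Q y) :=
    fun ν σ ξ => (d3 ν σ ξ).mul dQ
  have d5 : ∀ (ν σ ξ : Fin d), Differentiable ℝ (fun y : Fin d → ℝ => y ξ * C ν σ ξ * M y * Q y * pd σ f y) :=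
    fun ν σ ξ => (d4 ν σ ξ).mul (dP σ)
  -- derivative of one term
  have hterm : ∀ ν ξ σ : Fin d,
      pd ν (fun y => y ξ * C ν σ ξ * M y * Q y * pd σ f y) x
      = (if ξ = ν then C ν σ ξ * (M x * (Q x * pd σ f x)) else 0)
        + (x ξ * C ν σ ξ * (pd ν M x * (Q x * pd σ f x))
          + x ξ * C ν σ ξ * (pd ν Q x * (M x * pd σ f x))
          + x ξ * C ν σ ξ * (M x * Q x * pd ν (pd σ f) x)) := by
    intro ν ξ σ
    rw [pd_mul ν _ _ x ((d4 ν σ ξ).differentiableAt) ((dP σ).differentiableAt),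
        pd_mul ν _ _ x ((d3 ν σ ξ).differentiableAt) (dQ.differentiableAt),
        pd_mul ν _ _ x ((d2 ν σ ξ).differentiableAt) (dM.differentiableAt),
        pd_mul ν _ _ x ((dcoord ξ).differentiableAt) (differentiableAt_const _),
        pd_coord]
    have hc : pd ν (fun _ : Fin d → ℝ => C ν σ ξ) x = 0 := by
      simp [pd]
    rw [hc]
    by_cases h : ξ = ν <;> simp [h] <;> ring
  -- derivative of the sum
  have hsum : ∀ ν : Fin d,
      pd ν (fun y => ∑ ξ, ∑ σ, y ξ * C ν σ ξ * M y * Q y * pd σ f y) x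
      = ∑ ξ, ∑ σ, pd ν (fun y => y ξ * C ν σ ξ * M y * Q y * pd σ f y) x := by
    intro ν
    rw [pd_sum]
    · exact Finset.sum_congr rfl fun ξ _ => pd_sum _ _ _ _ (fun σ _ => (d5 ν σ ξ).differentiableAt)
    · intro ξ _
      exact DifferentiableAt.fun_sum fun σ _ => (d5 ν σ ξ).differentiableAt
  simp only [hsum, hterm, Finset.sum_add_distrib]
  -- name the four pieces
  have hS0 : (∑ ν : Fin d, ∑ ξ : Fin d, ∑ σ : Fin d,
      if ξ = ν then C ν σ ξ * (M x * (Q x * pd σ f x)) else 0)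
      = ∑ ν : Fin d, ∑ σ : Fin d, C ν σ ν * (M x * (Q x * pd σ f x)) := by
    refine Finset.sum_congr rfl fun ν _ => ?_
    rw [Finset.sum_comm]
    refine Finset.sum_congr rfl fun σ _ => ?_
    refine (Finset.sum_eq_single ν (fun b _ hb => if_neg hb)
      (fun h => absurd (Finset.mem_univ ν) h)).trans (if_pos rfl)
  have hS3 : (∑ ν : Fin d, ∑ ξ : Fin d, ∑ σ : Fin d,
      x ξ * C ν σ ξ * (M x * Q x * pd ν (pd σ f) x)) = 0 := by
    rw [Finset.sum_comm]
    refine Finset.sum_eq_zero fun ξ _ => ?_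
    set F : Fin d → Fin d → ℝ := fun ν σ => x ξ * C ν σ ξ * (M x * Q x * pd ν (pd σ f) x) with hF
    have hanti : ∀ ν σ, F σ ν = - F ν σ := by
      intro ν σ
      simp only [hF]
      rw [hC σ ν ξ, pd_swap f hf σ ν]
      ring
    have h1 : (∑ ν : Fin d, ∑ σ : Fin d, F ν σ) = ∑ ν : Fin d, ∑ σ : Fin d, F σ ν :=
      Finset.sum_comm
    have h2 : (∑ ν : Fin d, ∑ σ : Fin d, F σ ν) = - ∑ ν : Fin d, ∑ σ : Fin d, F ν σ := by
      rw [show (∑ ν : Fin d, ∑ σ : Fin d, F σ ν) = ∑ ν : Fin d, ∑ σ : Fin d, -F ν σ from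
        Finset.sum_congr rfl fun ν _ => Finset.sum_congr rfl fun σ _ => hanti ν σ]
      simp
    have := h1.trans h2
    linarith
  rw [hS3, hS0, hδM x, hδQ x, ht]
  have E1 : Q x * (M x * ∑ σ : Fin d, (∑ ν : Fin d, C ν σ ν) * pd σ f x)
      = ∑ ν : Fin d, ∑ σ : Fin d, C ν σ ν * (M x * (Q x * pd σ f x)) := by
    simp only [Finset.mul_sum, Finset.sum_mul]
    rw [Finset.sum_comm]
    exact Finset.sum_congr rfl fun _ _ => Finset.sum_congr rfl fun _ _ => by ring
  have E2 : Q x * pb C M f x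
      = ∑ ν : Fin d, ∑ ξ : Fin d, ∑ σ : Fin d,
        x ξ * C ν σ ξ * (pd ν M x * (Q x * pd σ f x)) := by
    simp only [pb, Finset.mul_sum]
    rw [Finset.sum_comm]
    exact Finset.sum_congr rfl fun _ _ => Finset.sum_congr rfl fun _ _ =>
      Finset.sum_congr rfl fun _ _ => by ring
  have E3 : M x * pb C Q f x
      = ∑ ν : Fin d, ∑ ξ : Fin d, ∑ σ : Fin d,
        x ξ * C ν σ ξ * (pd ν Q x * (M x * pd σ f x)) := by
    simp only [pb, Finset.mul_sum]
    rw [Finset.sum_comm]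
    exact Finset.sum_congr rfl fun _ _ => Finset.sum_congr rfl fun _ _ =>
      Finset.sum_congr rfl fun _ _ => by ring
  rw [mul_add, E1, E2, E3]
  ring
end
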